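/- Let c_n be the number of compositions of n having mex 3, i.e., compositions in which both 1 and 2 occur as parts but 3 does not. Then in ℤ⟦X⟧ one has (1 − X + X^2)(1 − X − X^2)(1 − 2X + X^3 − X^4)(1 − X − X^2 + X^3 − X^4)(1 − X − X^4) · Σ_{n≥0} c_n X^n = X^3 (1 − X)^3 (2 − 3X + X^3 − 2X^4). -/

import Mathlib

open PowerSeries

open Finset


/-- Finset of lists of positive integers avoiding parts in `S`, summing to `n`. -/
def Lf (S : Finset ℕ) : ℕ → Finset (List ℕ)
  | 0 => {[]}
  | (n+1) => (Finset.range (n+1)).attach.biUnion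
      (fun m => if (n+1-m.1) ∈ S then ∅ else
        (Lf S m.1).image (fun l => (n+1-m.1) :: l))
decreasing_by exact Finset.mem_range.mp m.2

lemma mem_Lf {S : Finset ℕ} : ∀ {n : ℕ} {l : List ℕ},
    l ∈ Lf S n ↔ l.sum = n ∧ ∀ i ∈ l, 0 < i ∧ i ∉ S := by
  intro n
  induction n using Nat.strong_induction_on with
  | _ n ih =>
    intro l
    match n with
    | 0 =>
      simp only [Lf, Finset.mem_singleton]
      constructor
      · rintro rfl; simp
      · rintro ⟨hs, hp⟩
        cases l with
        | nil => rfl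
        | cons a t =>
          exfalso
          have := (hp a (by simp)).1
          simp at hs
          omega
    | (n+1) =>
      rw [Lf]
      simp only [Finset.mem_biUnion, Finset.mem_attach, true_and, Subtype.exists]
      constructor
      · rintro ⟨m, hm, hl⟩
        have hm' : m < n + 1 := Finset.mem_range.mp hm
        split_ifs at hl with hS
        · simp at hl
        · simp only [Finset.mem_image] at hl
          obtain ⟨t, ht, rfl⟩ := hl
          obtain ⟨hts, htp⟩ := (ih m hm' ).mp ht
          refine ⟨by simp [hts]; omega, ?_⟩
          intro i hi
          rcases List.mem_cons.mp hi with rfl | hi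
          · exact ⟨by omega, hS⟩
          · exact htp i hi
      · rintro ⟨hs, hp⟩
        cases l with
        | nil => simp at hs
        | cons a t =>
          have ha := hp a (by simp)
          have hts : t.sum = n + 1 - a := by simp at hs; omega
          have haa : a ≤ n + 1 := by simp at hs; omega
          refine ⟨t.sum, Finset.mem_range.mpr (by omega), ?_⟩
          have : n + 1 - t.sum = a := by omega
          rw [this, if_neg ha.2]
          simp only [Finset.mem_image]
          exact ⟨t, (ih t.sum (by omega)).mpr ⟨rfl, fun i hi => hp i (by simp [hi])⟩, rfl⟩

lemma card_Lf_succ (S : Finset ℕ) (n : ℕ) :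
    (Lf S (n+1)).card
      = ∑ m ∈ Finset.range (n+1), if (n+1-m) ∈ S then 0 else (Lf S m).card := by
  rw [Lf]
  rw [Finset.card_biUnion]
  · rw [← Finset.sum_attach (Finset.range (n+1))
      (fun m => if (n+1-m) ∈ S then 0 else (Lf S m).card)]
    refine Finset.sum_congr rfl fun m _ => ?_
    split_ifs with h
    · simp
    · exact Finset.card_image_of_injective _ (fun a b hab => by simpa using hab)
  · intro a _ b _ hab
    simp only [Finset.disjoint_left]
    intro l hla hlb
    split_ifs at hla hlb with h1 h2 h2
    all_goals simp only [Finset.notMem_empty, Finset.mem_image] at hla hlb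
    obtain ⟨t, _, rfl⟩ := hla
    obtain ⟨t', _, heq⟩ := hlb
    have h1 : a.1 < n + 1 := Finset.mem_range.mp a.2
    have h2 : b.1 < n + 1 := Finset.mem_range.mp b.2
    have : n + 1 - b.1 = n + 1 - a.1 := by
      have := congrArg List.head? heq; simpa using this
    exact hab (Subtype.ext (by omega))

lemma key_Lf (S : Finset ℕ) (hS : ∀ k ∈ S, 1 ≤ k ∧ k ≤ 3) (n : ℕ) (hn : 2 ≤ n) :
    (Lf S (n+1)).card + ∑ k ∈ S, (Lf S (n+1-k)).card
      = ∑ m ∈ Finset.range (n+1), (Lf S m).card := by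
  have himg : S.image (fun k => n+1-k)
      = (Finset.range (n+1)).filter (fun m => n+1-m ∈ S) := by
    ext m
    simp only [Finset.mem_image, Finset.mem_filter, Finset.mem_range]
    constructor
    · rintro ⟨k, hk, rfl⟩
      have := hS k hk
      constructor
      · omega
      · have : n + 1 - (n + 1 - k) = k := by omega
        rw [this]; exact hk
    · rintro ⟨hm, hmem⟩
      exact ⟨n+1-m, hmem, by omega⟩
  have h2 : ∑ k ∈ S, (Lf S (n+1-k)).card
      = ∑ m ∈ Finset.range (n+1), (if (n+1-m) ∈ S then (Lf S m).card else 0) := by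
    rw [← Finset.sum_filter, ← himg, Finset.sum_image]
    intro a ha b hb hab
    have := hS a ha; have := hS b hb
    simp only at hab
    omega
  rw [card_Lf_succ, h2, ← Finset.sum_add_distrib]
  refine Finset.sum_congr rfl fun m _ => ?_
  split_ifs <;> simp

lemma key2_Lf (S : Finset ℕ) (hS : ∀ k ∈ S, 1 ≤ k ∧ k ≤ 3) (n : ℕ) (hn : 4 ≤ n) :
    (Lf S n).card + ∑ k ∈ S, (Lf S (n-k)).card
      = 2*(Lf S (n-1)).card + ∑ k ∈ S, (Lf S (n-1-k)).card := by
  have e1 := key_Lf S hS (n-1) (by omega)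
  have e2 := key_Lf S hS (n-2) (by omega)
  rw [show n-1+1 = n by omega] at e1
  rw [show n-2+1 = n-1 by omega] at e2
  have hr : ∑ m ∈ Finset.range n, (Lf S m).card
      = (∑ m ∈ Finset.range (n-1), (Lf S m).card) + (Lf S (n-1)).card := by
    conv_lhs => rw [show n = n-1+1 by omega]
    rw [Finset.sum_range_succ]
  rw [hr] at e1
  rw [e1, ← e2]
  ring

open PowerSeries in
lemma gfA : (1 - 2*X + X^3 - X^4 : PowerSeries ℤ) *
    PowerSeries.mk (fun n => ((Lf {3} n).card : ℤ)) = 1 - X := by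
  set F := PowerSeries.mk (fun n => ((Lf {3} n).card : ℤ)) with hF
  have h0 : (Lf {3} 0).card = 1 := by simp [Lf]
  have h1 : (Lf {3} 1).card = 1 := by
    rw [card_Lf_succ]; simp [Finset.sum_range_succ, h0]
  have h2 : (Lf {3} 2).card = 2 := by
    rw [card_Lf_succ]; simp [Finset.sum_range_succ, h0, h1]
  have h3 : (Lf {3} 3).card = 3 := by
    rw [card_Lf_succ]; simp [Finset.sum_range_succ, h0, h1, h2]
  have h4 : (Lf {3} 4).card = 6 := by
    rw [card_Lf_succ]; simp [Finset.sum_range_succ, h0, h1, h2, h3]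
  have hrec : ∀ n, 4 ≤ n → (Lf {3} n).card + (Lf {3} (n-3)).card
      = 2*(Lf {3} (n-1)).card + (Lf {3} (n-4)).card := by
    intro n hn
    have := key2_Lf {3} (by decide) n hn
    simp only [Finset.sum_singleton] at this
    rw [show n-1-3 = n-4 by omega] at this
    exact this
  have expand : (1 - 2*X + X^3 - X^4 : PowerSeries ℤ) * F
      = F - X^1*F - X^1*F + X^3*F - X^4*F := by ring
  rw [expand]
  ext n
  simp only [map_sub, map_add, PowerSeries.coeff_X_pow_mul', hF, PowerSeries.coeff_mk,
    PowerSeries.coeff_one, PowerSeries.coeff_X]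
  rcases le_or_gt n 4 with hn | hn
  · interval_cases n <;> simp [h0, h1, h2, h3, h4]
  · have hr := hrec n (by omega)
    have hn1 : (1:ℕ) ≤ n := by omega
    have hn3 : (3:ℕ) ≤ n := by omega
    have hn4 : (4:ℕ) ≤ n := by omega
    rw [if_pos hn1, if_pos hn3, if_pos hn4, if_neg (by omega : ¬ n = 0),
      if_neg (by omega : ¬ n = 1)]
    push_cast
    omega

open PowerSeries in
lemma gfB : (1 - X - X^2 + X^3 - X^4 : PowerSeries ℤ) *
    PowerSeries.mk (fun n => ((Lf {1,3} n).card : ℤ)) = 1 - X := by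
  set F := PowerSeries.mk (fun n => ((Lf {1,3} n).card : ℤ)) with hF
  have h0 : (Lf {1,3} 0).card = 1 := by simp [Lf]
  have h1 : (Lf {1,3} 1).card = 0 := by
    rw [card_Lf_succ]; simp [Finset.sum_range_succ, h0]
  have h2 : (Lf {1,3} 2).card = 1 := by
    rw [card_Lf_succ]; simp [Finset.sum_range_succ, h0, h1]
  have h3 : (Lf {1,3} 3).card = 0 := by
    rw [card_Lf_succ]; simp [Finset.sum_range_succ, h0, h1, h2]
  have h4 : (Lf {1,3} 4).card = 2 := by
    rw [card_Lf_succ]; simp [Finset.sum_range_succ, h0, h1, h2, h3]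
  have hrec : ∀ n, 4 ≤ n → (Lf {1,3} n).card + ((Lf {1,3} (n-1)).card + (Lf {1,3} (n-3)).card)
      = 2*(Lf {1,3} (n-1)).card + ((Lf {1,3} (n-2)).card + (Lf {1,3} (n-4)).card) := by
    intro n hn
    have := key2_Lf {1,3} (by decide) n hn
    rw [show ({1,3} : Finset ℕ) = insert 1 {3} from rfl] at this
    rw [Finset.sum_insert (by decide), Finset.sum_insert (by decide),
      Finset.sum_singleton, Finset.sum_singleton] at this
    rw [show n-1-3 = n-4 by omega, show n-1-1 = n-2 by omega] at this
    exact this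
  have expand : (1 - X - X^2 + X^3 - X^4 : PowerSeries ℤ) * F
      = F - X^1*F - X^2*F + X^3*F - X^4*F := by ring
  rw [expand]
  ext n
  simp only [map_sub, map_add, PowerSeries.coeff_X_pow_mul', hF, PowerSeries.coeff_mk,
    PowerSeries.coeff_one, PowerSeries.coeff_X]
  rcases le_or_gt n 4 with hn | hn
  · interval_cases n <;> simp [h0, h1, h2, h3, h4]
  · have hr := hrec n (by omega)
    rw [if_pos (by omega : (1:ℕ) ≤ n), if_pos (by omega : (2:ℕ) ≤ n),
      if_pos (by omega : (3:ℕ) ≤ n), if_pos (by omega : (4:ℕ) ≤ n),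
      if_neg (by omega : ¬ n = 0), if_neg (by omega : ¬ n = 1)]
    push_cast
    omega

open PowerSeries in
lemma gfD : ((1 - X + X^2) * (1 - X - X^2) : PowerSeries ℤ) *
    PowerSeries.mk (fun n => ((Lf {2,3} n).card : ℤ)) = 1 - X := by
  set F := PowerSeries.mk (fun n => ((Lf {2,3} n).card : ℤ)) with hF
  have h0 : (Lf {2,3} 0).card = 1 := by simp [Lf]
  have h1 : (Lf {2,3} 1).card = 1 := by
    rw [card_Lf_succ]; simp [Finset.sum_range_succ, h0]
  have h2 : (Lf {2,3} 2).card = 1 := by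
    rw [card_Lf_succ]; simp [Finset.sum_range_succ, h0, h1]
  have h3 : (Lf {2,3} 3).card = 1 := by
    rw [card_Lf_succ]; simp [Finset.sum_range_succ, h0, h1, h2]
  have h4 : (Lf {2,3} 4).card = 2 := by
    rw [card_Lf_succ]; simp [Finset.sum_range_succ, h0, h1, h2, h3]
  have hrec : ∀ n, 4 ≤ n → (Lf {2,3} n).card + ((Lf {2,3} (n-2)).card + (Lf {2,3} (n-3)).card)
      = 2*(Lf {2,3} (n-1)).card + ((Lf {2,3} (n-3)).card + (Lf {2,3} (n-4)).card) := by
    intro n hn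
    have := key2_Lf {2,3} (by decide) n hn
    rw [show ({2,3} : Finset ℕ) = insert 2 {3} from rfl] at this
    rw [Finset.sum_insert (by decide), Finset.sum_insert (by decide),
      Finset.sum_singleton, Finset.sum_singleton] at this
    rw [show n-1-3 = n-4 by omega, show n-1-2 = n-3 by omega] at this
    exact this
  have expand : ((1 - X + X^2) * (1 - X - X^2) : PowerSeries ℤ) * F
      = F - X^1*F - X^1*F + X^2*F - X^4*F := by ring
  rw [expand]
  ext n
  simp only [map_sub, map_add, PowerSeries.coeff_X_pow_mul', hF, PowerSeries.coeff_mk,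
    PowerSeries.coeff_one, PowerSeries.coeff_X]
  rcases le_or_gt n 4 with hn | hn
  · interval_cases n <;> simp [h0, h1, h2, h3, h4]
  · have hr := hrec n (by omega)
    rw [if_pos (by omega : (1:ℕ) ≤ n), if_pos (by omega : (2:ℕ) ≤ n),
      if_pos (by omega : (4:ℕ) ≤ n),
      if_neg (by omega : ¬ n = 0), if_neg (by omega : ¬ n = 1)]
    push_cast
    omega

open PowerSeries in
lemma gfE : (1 - X - X^4 : PowerSeries ℤ) *
    PowerSeries.mk (fun n => ((Lf {1,2,3} n).card : ℤ)) = 1 - X := by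
  set F := PowerSeries.mk (fun n => ((Lf {1,2,3} n).card : ℤ)) with hF
  have h0 : (Lf {1,2,3} 0).card = 1 := by simp [Lf]
  have h1 : (Lf {1,2,3} 1).card = 0 := by
    rw [card_Lf_succ]; simp [Finset.sum_range_succ, h0]
  have h2 : (Lf {1,2,3} 2).card = 0 := by
    rw [card_Lf_succ]; simp [Finset.sum_range_succ, h0, h1]
  have h3 : (Lf {1,2,3} 3).card = 0 := by
    rw [card_Lf_succ]; simp [Finset.sum_range_succ, h0, h1, h2]
  have h4 : (Lf {1,2,3} 4).card = 1 := by
    rw [card_Lf_succ]; simp [Finset.sum_range_succ, h0, h1, h2, h3]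
  have hrec : ∀ n, 4 ≤ n → (Lf {1,2,3} n).card +
        ((Lf {1,2,3} (n-1)).card + ((Lf {1,2,3} (n-2)).card + (Lf {1,2,3} (n-3)).card))
      = 2*(Lf {1,2,3} (n-1)).card +
        ((Lf {1,2,3} (n-2)).card + ((Lf {1,2,3} (n-3)).card + (Lf {1,2,3} (n-4)).card)) := by
    intro n hn
    have := key2_Lf {1,2,3} (by decide) n hn
    rw [show ({1,2,3} : Finset ℕ) = insert 1 (insert 2 {3}) from rfl] at this
    rw [Finset.sum_insert (by decide), Finset.sum_insert (by decide),
      Finset.sum_insert (by decide), Finset.sum_insert (by decide),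
      Finset.sum_singleton, Finset.sum_singleton] at this
    rw [show n-1-3 = n-4 by omega, show n-1-2 = n-3 by omega,
      show n-1-1 = n-2 by omega] at this
    exact this
  have expand : (1 - X - X^4 : PowerSeries ℤ) * F = F - X^1*F - X^4*F := by ring
  rw [expand]
  ext n
  simp only [map_sub, map_add, PowerSeries.coeff_X_pow_mul', hF, PowerSeries.coeff_mk,
    PowerSeries.coeff_one, PowerSeries.coeff_X]
  rcases le_or_gt n 4 with hn | hn
  · interval_cases n <;> simp [h0, h1, h2, h3, h4]
  · have hr := hrec n (by omega)
    rw [if_pos (by omega : (1:ℕ) ≤ n), if_pos (by omega : (4:ℕ) ≤ n),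
      if_neg (by omega : ¬ n = 0), if_neg (by omega : ¬ n = 1)]
    push_cast
    omega

lemma Lf_filter_one (n : ℕ) :
    Lf {1,3} n = (Lf {3} n).filter (fun l => 1 ∉ l) := by
  ext l
  simp only [mem_Lf, Finset.mem_filter, Finset.mem_insert, Finset.mem_singleton]
  constructor
  · rintro ⟨hs, hp⟩
    exact ⟨⟨hs, fun i hi => ⟨(hp i hi).1, fun h => (hp i hi).2 (Or.inr h)⟩⟩,
      fun h => (hp 1 h).2 (Or.inl rfl)⟩
  · rintro ⟨⟨hs, hp⟩, h1⟩
    refine ⟨hs, fun i hi => ⟨(hp i hi).1, ?_⟩⟩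
    rintro (rfl | rfl)
    · exact h1 hi
    · exact (hp 3 hi).2 rfl

lemma Lf_filter_two (n : ℕ) :
    Lf {2,3} n = (Lf {3} n).filter (fun l => 2 ∉ l) := by
  ext l
  simp only [mem_Lf, Finset.mem_filter, Finset.mem_insert, Finset.mem_singleton]
  constructor
  · rintro ⟨hs, hp⟩
    exact ⟨⟨hs, fun i hi => ⟨(hp i hi).1, fun h => (hp i hi).2 (Or.inr h)⟩⟩,
      fun h => (hp 2 h).2 (Or.inl rfl)⟩
  · rintro ⟨⟨hs, hp⟩, h1⟩
    refine ⟨hs, fun i hi => ⟨(hp i hi).1, ?_⟩⟩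
    rintro (rfl | rfl)
    · exact h1 hi
    · exact (hp 3 hi).2 rfl

lemma Lf_filter_both (n : ℕ) :
    Lf {1,2,3} n = ((Lf {3} n).filter (fun l => 1 ∉ l)).filter (fun l => 2 ∉ l) := by
  ext l
  simp only [mem_Lf, Finset.mem_filter, Finset.mem_insert, Finset.mem_singleton]
  constructor
  · rintro ⟨hs, hp⟩
    exact ⟨⟨⟨hs, fun i hi => ⟨(hp i hi).1, fun h => (hp i hi).2 (Or.inr (Or.inr h))⟩⟩,
      fun h => (hp 1 h).2 (Or.inl rfl)⟩, fun h => (hp 2 h).2 (Or.inr (Or.inl rfl))⟩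
  · rintro ⟨⟨⟨hs, hp⟩, h1⟩, h2⟩
    refine ⟨hs, fun i hi => ⟨(hp i hi).1, ?_⟩⟩
    rintro (rfl | rfl | rfl)
    · exact h1 hi
    · exact h2 hi
    · exact (hp 3 hi).2 rfl

lemma cardc (n : ℕ) :
    Nat.card {c : Composition n // 1 ∈ c.blocks ∧ 2 ∈ c.blocks ∧ 3 ∉ c.blocks}
      = ((Lf {3} n).filter (fun l => 1 ∈ l ∧ 2 ∈ l)).card := by
  rw [Nat.card_eq_fintype_card, Fintype.card_subtype]
  apply Finset.card_nbij (fun c => c.blocks)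
  · intro c hc
    simp only [Finset.mem_coe, Finset.mem_filter, Finset.mem_univ, true_and] at hc
    simp only [Finset.mem_coe, Finset.mem_filter, mem_Lf, Finset.mem_singleton]
    exact ⟨⟨c.blocks_sum, fun i hi => ⟨c.blocks_pos hi, fun h => hc.2.2 (h ▸ hi)⟩⟩,
      hc.1, hc.2.1⟩
  · intro c _ c' _ h
    exact Composition.ext h
  · intro l hl
    simp only [Finset.coe_filter, Set.mem_setOf_eq, Finset.mem_filter, mem_Lf,
      Finset.mem_singleton] at hl
    obtain ⟨⟨hs, hp⟩, h1, h2⟩ := hl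
    refine ⟨⟨l, fun {i} hi => (hp i hi).1, hs⟩, ?_, rfl⟩
    simp only [Finset.coe_filter, Set.mem_setOf_eq, Finset.mem_univ, true_and]
    exact ⟨h1, h2, fun h => (hp 3 h).2 rfl⟩

lemma IE (n : ℕ) :
    Nat.card {c : Composition n // 1 ∈ c.blocks ∧ 2 ∈ c.blocks ∧ 3 ∉ c.blocks}
      + (Lf {1,3} n).card + (Lf {2,3} n).card
      = (Lf {3} n).card + (Lf {1,2,3} n).card := by
  rw [cardc, Lf_filter_one, Lf_filter_two, Lf_filter_both]
  rw [show ((Lf {3} n).filter (fun l => 1 ∈ l ∧ 2 ∈ l))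
      = (((Lf {3} n).filter (fun l => 1 ∈ l)).filter (fun l => 2 ∈ l)) from by
    rw [Finset.filter_filter]]
  have t0 := Finset.card_filter_add_card_filter_not (s := Lf {3} n)
    (p := fun l => 1 ∈ l)
  have t1 := Finset.card_filter_add_card_filter_not
    (s := (Lf {3} n).filter (fun l => 1 ∈ l)) (p := fun l => 2 ∈ l)
  have t2 := Finset.card_filter_add_card_filter_not
    (s := (Lf {3} n).filter (fun l => ¬ 1 ∈ l)) (p := fun l => 2 ∈ l)
  have t3 := Finset.card_filter_add_card_filter_not
    (s := (Lf {3} n).filter (fun l => ¬ 2 ∈ l)) (p := fun l => 1 ∈ l)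
  have hcomm1 : ((Lf {3} n).filter (fun l => ¬ 2 ∈ l)).filter (fun l => 1 ∈ l)
      = ((Lf {3} n).filter (fun l => 1 ∈ l)).filter (fun l => ¬ 2 ∈ l) :=
    Finset.filter_comm _ _ _
  have hcomm2 : ((Lf {3} n).filter (fun l => ¬ 2 ∈ l)).filter (fun l => ¬ 1 ∈ l)
      = ((Lf {3} n).filter (fun l => ¬ 1 ∈ l)).filter (fun l => ¬ 2 ∈ l) :=
    Finset.filter_comm _ _ _
  rw [hcomm1, hcomm2] at t3
  omega


/-- if `c n` is the number of compositions of `n` with mex 3 (both 1 and 2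
occur as parts but 3 does not), then
`(1 − X + X²)(1 − X − X²)(1 − 2X + X³ − X⁴)(1 − X − X² + X³ − X⁴)(1 − X − X⁴) · Σ cₙ Xⁿ
  = X³(1 − X)³(2 − 3X + X³ − 2X⁴)` in `ℤ⟦X⟧`. -/
theorem stmt_7 :
    (1 - (X : PowerSeries ℤ) + X ^ 2) * (1 - X - X ^ 2) * (1 - 2 * X + X ^ 3 - X ^ 4) *
        (1 - X - X ^ 2 + X ^ 3 - X ^ 4) * (1 - X - X ^ 4) *
        PowerSeries.mk
          (fun n =>
            (Nat.card {c : Composition n //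
              1 ∈ c.blocks ∧ 2 ∈ c.blocks ∧ 3 ∉ c.blocks} : ℤ)) =
      X ^ 3 * (1 - X) ^ 3 * (2 - 3 * X + X ^ 3 - 2 * X ^ 4) := by
  have hmk : PowerSeries.mk
        (fun n => (Nat.card {c : Composition n //
            1 ∈ c.blocks ∧ 2 ∈ c.blocks ∧ 3 ∉ c.blocks} : ℤ))
      = PowerSeries.mk (fun n => ((Lf {3} n).card : ℤ))
        - PowerSeries.mk (fun n => ((Lf {1,3} n).card : ℤ))
        - PowerSeries.mk (fun n => ((Lf {2,3} n).card : ℤ))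
        + PowerSeries.mk (fun n => ((Lf {1,2,3} n).card : ℤ)) := by
    ext n
    simp only [map_sub, map_add, PowerSeries.coeff_mk]
    have := IE n
    omega
  rw [hmk]
  linear_combination
    ((1 - X + X^2) * (1 - X - X^2) * (1 - X - X^2 + X^3 - X^4) * (1 - X - X^4)
        : PowerSeries ℤ) * gfA
    - ((1 - X + X^2) * (1 - X - X^2) * (1 - 2*X + X^3 - X^4) * (1 - X - X^4)
        : PowerSeries ℤ) * gfB
    - ((1 - 2*X + X^3 - X^4) * (1 - X - X^2 + X^3 - X^4) * (1 - X - X^4)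
        : PowerSeries ℤ) * gfD
    + ((1 - X + X^2) * (1 - X - X^2) * (1 - 2*X + X^3 - X^4) * (1 - X - X^2 + X^3 - X^4)
        : PowerSeries ℤ) * gfE
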